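/- (Sufficient condition for robustness.) Suppose that for all i ∈ {1,…,m} and all u ∈ ℝⁿ the limit C_i(u) := lim_{t→∞} f_i(t H_i u)/t exists and is finite, and that for every nonzero u ∈ ℝⁿ and every index set I ⊆ {1,…,m} with |I| = p one has Σ_{i∈I} C_i(u) < Σ_{i∉I} C_i(u). Then for every z = (z_1,…,z_m) there exists μ ≥ 0 such that for every (p,m)-sparse attack a and every x̂ ∈ ℝⁿ that minimizes x̂ ↦ Σ_{i=1}^m f_i(z_i + a_i − H_i x̂), one has ‖x̂‖ ≤ μ. -/

import Mathlib

open Filter Topology Set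

section aux
variable {E : Type*} [NormedAddCommGroup E] [NormedSpace ℝ E] [FiniteDimensional ℝ E]

lemma aux_cont (f : E → ℝ) (hf : ConvexOn ℝ Set.univ f) : Continuous f := by
  rw [← continuousOn_univ]
  exact hf.continuousOn isOpen_univ

lemma aux_L1 (f : E → ℝ) (hf : ConvexOn ℝ Set.univ f) (hcont : Continuous f)
    {v : E} {c : ℝ} (hc : Filter.Tendsto (fun t : ℝ => f (t • v) / t) atTop (𝓝 c)) (x : E) :
    f (x + v) ≤ f x + c := by
  have h2 : Tendsto (fun l : ℝ => l * f (l⁻¹ • v)) (𝓝[>] 0) (𝓝 c) := by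
    refine (hc.comp tendsto_inv_nhdsGT_zero).congr' ?_
    filter_upwards [self_mem_nhdsWithin] with l (hl : 0 < l)
    simp only [Function.comp_apply]
    rw [div_eq_mul_inv, inv_inv, mul_comm]
  have h1 : Tendsto (fun l : ℝ => (1 - l) * f ((1 - l)⁻¹ • x)) (𝓝[>] 0) (𝓝 (f x)) := by
    have T1 : Tendsto (fun l : ℝ => 1 - l) (𝓝 0) (𝓝 1) := by
      have := (tendsto_const_nhds : Tendsto (fun _ : ℝ => (1:ℝ)) (𝓝 0) (𝓝 1)).sub
        (tendsto_id (x := 𝓝 (0:ℝ)))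
      simpa using this
    have T2 : Tendsto (fun l : ℝ => (1 - l)⁻¹ • x) (𝓝 0) (𝓝 x) := by
      have := (T1.inv₀ one_ne_zero).smul_const x
      simpa using this
    have := T1.mul ((hcont.tendsto x).comp T2)
    rw [one_mul] at this
    exact this.mono_left nhdsWithin_le_nhds
  have hev : ∀ᶠ l in 𝓝[>] (0 : ℝ),
      f (x + v) ≤ (1 - l) * f ((1 - l)⁻¹ • x) + l * f (l⁻¹ • v) := by
    have hio : Set.Ioo (0:ℝ) 1 ∈ 𝓝[>] (0:ℝ) := Ioo_mem_nhdsGT_of_mem ⟨le_refl 0, zero_lt_one⟩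
    filter_upwards [hio] with l hl
    obtain ⟨hl0, hl1⟩ := hl
    have he : x + v = (1 - l) • ((1 - l)⁻¹ • x) + l • (l⁻¹ • v) := by
      rw [smul_inv_smul₀ (by linarith), smul_inv_smul₀ (ne_of_gt hl0)]
    rw [he]
    exact hf.2 (mem_univ _) (mem_univ _) (by linarith) hl0.le (by ring)
  exact ge_of_tendsto (h1.add h2) hev

omit [FiniteDimensional ℝ E] in
lemma aux_homog (f : E → ℝ) {v : E} {c : ℝ}
    (hc : Tendsto (fun t : ℝ => f (t • v) / t) atTop (𝓝 c)) {s : ℝ} (hs : 0 < s) :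
    Tendsto (fun t : ℝ => f (t • s • v) / t) atTop (𝓝 (s * c)) := by
  have h1 : Tendsto (fun t : ℝ => t * s) atTop atTop := Tendsto.atTop_mul_const hs tendsto_id
  have h2 := (hc.comp h1).const_mul s
  refine h2.congr' ?_
  filter_upwards [eventually_gt_atTop 0] with t ht
  simp only [Function.comp_apply]
  rw [smul_smul]
  field_simp

omit [FiniteDimensional ℝ E] in
lemma aux_even (f : E → ℝ) (hsym : ∀ u, f u = f (-u)) {v : E} {c : ℝ}
    (hc : Tendsto (fun t : ℝ => f (t • v) / t) atTop (𝓝 c)) :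
    Tendsto (fun t : ℝ => f (t • (-v)) / t) atTop (𝓝 c) := by
  refine hc.congr fun t => ?_
  rw [smul_neg, ← hsym]

lemma aux_L3 (f : E → ℝ) (hf : ConvexOn ℝ Set.univ f) (hcont : Continuous f)
    (hsym : ∀ u, f u = f (-u)) {v : E} {c : ℝ}
    (hc : Tendsto (fun t : ℝ => f (t • v) / t) atTop (𝓝 c)) (z : E) :
    Tendsto (fun s : ℝ => f (z - s • v) / s) atTop (𝓝 c) := by
  have hupper : ∀ s : ℝ, 0 < s → f (z - s • v) ≤ f z + s * c := by
    intro s hs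
    have := aux_L1 f hf hcont (aux_homog f (aux_even f hsym hc) hs) z
    rwa [smul_neg, ← sub_eq_add_neg] at this
  have hupper' : ∀ s : ℝ, 0 < s → f (z + s • v) ≤ f z + s * c := by
    intro s hs
    exact aux_L1 f hf hcont (aux_homog f hc hs) z
  have hlower : ∀ s : ℝ, 0 < s → 2 * f (s • v) - f z - s * c ≤ f (z - s • v) := by
    intro s hs
    have he : s • v = (1/2 : ℝ) • (-(z - s • v)) + (1/2 : ℝ) • (z + s • v) := by
      module
    have hmid : f (s • v) ≤ (1/2 : ℝ) * f (-(z - s • v)) + (1/2 : ℝ) * f (z + s • v) := by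
      conv_lhs => rw [he]
      apply hf.2 (mem_univ _) (mem_univ _) <;> norm_num
    rw [← hsym] at hmid
    have := hupper' s hs
    linarith
  have hlow : Tendsto (fun s : ℝ => 2 * (f (s • v) / s) - f z / s - c) atTop (𝓝 c) := by
    have h1 := hc.const_mul 2
    have h2 : Tendsto (fun s : ℝ => f z / s) atTop (𝓝 0) :=
      Tendsto.div_atTop tendsto_const_nhds tendsto_id
    have h3 := (h1.sub h2).sub (tendsto_const_nhds (x := c))
    norm_num at h3
    have he : 2 * c - c = c := by ring
    rwa [he] at h3
  have hhi : Tendsto (fun s : ℝ => f z / s + c) atTop (𝓝 c) := by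
    have h2 : Tendsto (fun s : ℝ => f z / s) atTop (𝓝 0) :=
      Tendsto.div_atTop tendsto_const_nhds tendsto_id
    have h3 := h2.add (tendsto_const_nhds (x := c))
    norm_num at h3
    exact h3
  refine tendsto_of_tendsto_of_tendsto_of_le_of_le' hlow hhi ?_ ?_
  · filter_upwards [eventually_gt_atTop 0] with s hs
    calc 2 * (f (s • v) / s) - f z / s - c = (2 * f (s • v) - f z - s * c) / s := by
          field_simp
      _ ≤ f (z - s • v) / s := (div_le_div_iff_of_pos_right hs).mpr (hlower s hs)
  · filter_upwards [eventually_gt_atTop 0] with s hs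
    calc f (z - s • v) / s ≤ (f z + s * c) / s :=
          (div_le_div_iff_of_pos_right hs).mpr (hupper s hs)
      _ = f z / s + c := by field_simp
end aux

section eucl

lemma mulVec_smul_euc {k l : ℕ} (A : Matrix (Fin k) (Fin l) ℝ) (t : ℝ)
    (w : EuclideanSpace ℝ (Fin l)) : A.mulVec (t • w) = t • A.mulVec w := by
  funext j
  simp [Matrix.mulVec, dotProduct, PiLp.smul_apply, smul_eq_mul, Finset.mul_sum]
  exact Finset.sum_congr rfl fun i _ => by ring

lemma mulVec_lin_euc {k l : ℕ} (A : Matrix (Fin k) (Fin l) ℝ) (la lb : ℝ)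
    (a b : EuclideanSpace ℝ (Fin l)) :
    A.mulVec (la • a + lb • b) = la • A.mulVec a + lb • A.mulVec b := by
  funext j
  simp [Matrix.mulVec, dotProduct, PiLp.smul_apply, PiLp.add_apply, smul_eq_mul,
    Finset.mul_sum, Finset.sum_add_distrib, mul_add]
  congr 1 <;> exact Finset.sum_congr rfl fun i _ => by ring

lemma mulVec_zero_euc {k l : ℕ} (A : Matrix (Fin k) (Fin l) ℝ) :
    A.mulVec (0 : EuclideanSpace ℝ (Fin l)) = 0 := by
  funext j
  simp [Matrix.mulVec, dotProduct]

lemma mulVec_cont_euc {k l : ℕ} (A : Matrix (Fin k) (Fin l) ℝ) :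
    Continuous (fun w : EuclideanSpace ℝ (Fin l) => A.mulVec w) :=
  (A.mulVecLin.comp (WithLp.linearEquiv 2 ℝ (Fin l → ℝ)).toLinearMap).continuous_of_finiteDimensional

end eucl


/-- Theorem 1 (sufficient condition for robustness): if all the limits
`C i u = lim_{t→∞} f i (t • H i u) / t` exist and for every nonzero `u` and
every index set `I` with `|I| = p` one has `∑_{i∈I} C i u < ∑_{i∉I} C i u`,
then for every `z` there exists `μ ≥ 0` bounding the norm of every minimizer
of the attacked cost, for every `(p,m)`-sparse attack. -/
theorem sufficient_condition_for_robustness (n m p : ℕ) (hpm : p < m)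
    (mi : Fin m → ℕ)
    (H : ∀ i : Fin m, Matrix (Fin (mi i)) (Fin n) ℝ)
    (f : ∀ i : Fin m, (Fin (mi i) → ℝ) → ℝ)
    (hconv : ∀ i, ConvexOn ℝ Set.univ (f i))
    (hsym : ∀ i u, f i u = f i (-u))
    (hnonneg : ∀ i u, 0 ≤ f i u)
    (hzero : ∀ i, f i 0 = 0)
    (C : Fin m → EuclideanSpace ℝ (Fin n) → ℝ)
    (hC : ∀ (i : Fin m) (u : EuclideanSpace ℝ (Fin n)),
      Filter.Tendsto (fun t : ℝ => f i (t • (H i).mulVec u) / t) Filter.atTop (nhds (C i u)))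
    (hmaj : ∀ u : EuclideanSpace ℝ (Fin n), u ≠ 0 →
      ∀ I : Finset (Fin m), I.card = p → ∑ i ∈ I, C i u < ∑ i ∈ Iᶜ, C i u)
    (z : ∀ i : Fin m, Fin (mi i) → ℝ) :
    ∃ μ : ℝ, 0 ≤ μ ∧
      ∀ a : ∀ i : Fin m, Fin (mi i) → ℝ,
        (∃ I : Finset (Fin m), I.card ≤ p ∧ ∀ i ∉ I, a i = 0) →
        ∀ xhat : EuclideanSpace ℝ (Fin n),
          (∀ x : EuclideanSpace ℝ (Fin n),
            ∑ i, f i (z i + a i - (H i).mulVec xhat) ≤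
              ∑ i, f i (z i + a i - (H i).mulVec x)) →
          ‖xhat‖ ≤ μ := by
  classical
  have fcont : ∀ i, Continuous (f i) := fun i => aux_cont (f i) (hconv i)
  have hCconv : ∀ i, ConvexOn ℝ Set.univ (C i) := by
    intro i
    refine ⟨convex_univ, ?_⟩
    intro a _ b _ la lb hla hlb hlab
    have h1 := ((hC i a).const_mul la).add ((hC i b).const_mul lb)
    refine le_of_tendsto_of_tendsto (hC i (la • a + lb • b)) h1 ?_
    filter_upwards [Filter.eventually_gt_atTop 0] with t ht
    have e : t • (H i).mulVec (la • a + lb • b)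
        = la • (t • (H i).mulVec a) + lb • (t • (H i).mulVec b) := by
      rw [mulVec_lin_euc, smul_add, smul_comm t la, smul_comm t lb]
    calc f i (t • (H i).mulVec (la • a + lb • b)) / t
        = f i (la • (t • (H i).mulVec a) + lb • (t • (H i).mulVec b)) / t := by rw [e]
      _ ≤ (la * f i (t • (H i).mulVec a) + lb * f i (t • (H i).mulVec b)) / t :=
          (div_le_div_iff_of_pos_right ht).mpr
            ((hconv i).2 (Set.mem_univ _) (Set.mem_univ _) hla hlb hlab)
      _ = la * (f i (t • (H i).mulVec a) / t) + lb * (f i (t • (H i).mulVec b) / t) := by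
          field_simp
  have hCcont : ∀ i, Continuous (C i) := fun i => aux_cont (C i) (hCconv i)
  have hChom : ∀ (i : Fin m) (t : ℝ), 0 < t → ∀ w : EuclideanSpace ℝ (Fin n),
      C i (t • w) = t * C i w := by
    intro i t ht w
    have h2 : Filter.Tendsto (fun r : ℝ => f i (r • (H i).mulVec (t • w)) / r)
        Filter.atTop (𝓝 (t * C i w)) := by
      rw [mulVec_smul_euc]
      exact aux_homog (f i) (hC i w) ht
    exact tendsto_nhds_unique (hC i (t • w)) h2
  have hL1 : ∀ (i : Fin m) (x : Fin (mi i) → ℝ) (v : EuclideanSpace ℝ (Fin n)),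
      f i (x + (H i).mulVec v) ≤ f i x + C i v :=
    fun i x v => aux_L1 (f i) (hconv i) (fcont i) (hC i v) x
  have hL3 : ∀ (i : Fin m) (u : EuclideanSpace ℝ (Fin n)),
      Filter.Tendsto (fun s : ℝ => f i (z i - s • (H i).mulVec u) / s)
        Filter.atTop (𝓝 (C i u)) :=
    fun i u => aux_L3 (f i) (hconv i) (fcont i) (hsym i) (hC i u) (z i)
  -- per-index-set bound
  have key : ∀ I : Finset (Fin m), I.card = p → ∃ μI : ℝ, 0 ≤ μI ∧
      ∀ x : EuclideanSpace ℝ (Fin n), μI < ‖x‖ →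
        ∑ i ∈ Iᶜ, f i (z i) + ∑ i ∈ I, C i x < ∑ i ∈ Iᶜ, f i (z i - (H i).mulVec x) := by
    intro I hI
    have hsel : ∀ u : EuclideanSpace ℝ (Fin n), ∃ s : ℝ, 1 ≤ s ∧ (‖u‖ = 1 →
        ∑ i ∈ I, C i u < ∑ i ∈ Iᶜ, (f i (z i - s • (H i).mulVec u) - f i (z i)) / s) := by
      intro u
      by_cases hu : ‖u‖ = 1
      · have hu0 : u ≠ 0 := by
          intro h; rw [h, norm_zero] at hu; exact one_ne_zero hu.symm
        have hlim : Filter.Tendsto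
            (fun s : ℝ => ∑ i ∈ Iᶜ, (f i (z i - s • (H i).mulVec u) - f i (z i)) / s)
            Filter.atTop (𝓝 (∑ i ∈ Iᶜ, C i u)) := by
          apply tendsto_finset_sum
          intro i _
          have h2 : Filter.Tendsto (fun s : ℝ => f i (z i) / s) Filter.atTop (𝓝 0) :=
            Filter.Tendsto.div_atTop tendsto_const_nhds tendsto_id
          have h3 := (hL3 i u).sub h2
          rw [sub_zero] at h3
          exact h3.congr fun s => (sub_div _ _ _).symm
        have hev := (tendsto_order.1 hlim).1 _ (hmaj u hu0 I hI)
        obtain ⟨s, hs1, hs2⟩ := ((Filter.eventually_ge_atTop 1).and hev).exists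
        exact ⟨s, hs1, fun _ => hs2⟩
      · exact ⟨1, le_refl 1, fun h => absurd h hu⟩
    choose su hsu1 hsu2 using hsel
    set U : EuclideanSpace ℝ (Fin n) → Set (EuclideanSpace ℝ (Fin n)) := fun u =>
      {w | ∑ i ∈ I, C i w <
        ∑ i ∈ Iᶜ, (f i (z i - su u • (H i).mulVec w) - f i (z i)) / su u} with hUdef
    have hUopen : ∀ u, IsOpen (U u) := by
      intro u
      apply isOpen_lt
      · exact continuous_finset_sum _ fun i _ => hCcont i
      · exact continuous_finset_sum _ fun i _ =>
          (((fcont i).comp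
            (continuous_const.sub ((mulVec_cont_euc (H i)).const_smul (su u)))).sub
              continuous_const).div_const _
    obtain ⟨T, hTS, hcover⟩ :=
      (isCompact_sphere (0 : EuclideanSpace ℝ (Fin n)) 1).elim_nhds_subcover U
        (fun u hu => (hUopen u).mem_nhds
          (hsu2 u (by rwa [mem_sphere_zero_iff_norm] at hu)))
    refine ⟨∑ u ∈ T, su u,
      Finset.sum_nonneg fun u _ => zero_le_one.trans (hsu1 u), ?_⟩
    intro x hx
    have ht : (0:ℝ) < ‖x‖ :=
      lt_of_le_of_lt (Finset.sum_nonneg fun u _ => zero_le_one.trans (hsu1 u)) hx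
    set w : EuclideanSpace ℝ (Fin n) := ‖x‖⁻¹ • x with hw
    have hwS : w ∈ Metric.sphere (0 : EuclideanSpace ℝ (Fin n)) 1 := by
      rw [mem_sphere_zero_iff_norm, hw, norm_smul, norm_inv, norm_norm,
        inv_mul_cancel₀ ht.ne']
    have hxw : x = ‖x‖ • w := by
      rw [hw, smul_smul, mul_inv_cancel₀ ht.ne', one_smul]
    have hwU : ∃ u ∈ T, w ∈ U u := by
      have := hcover hwS
      simpa using this
    obtain ⟨u, huT, hwU⟩ := hwU
    simp only [hUdef, Set.mem_setOf_eq] at hwU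
    have hspos : 0 < su u := lt_of_lt_of_le zero_lt_one (hsu1 u)
    have hsu_le : su u ≤ ∑ u' ∈ T, su u' :=
      Finset.single_le_sum (fun u' _ => zero_le_one.trans (hsu1 u')) huT
    have hst : su u < ‖x‖ := lt_of_le_of_lt hsu_le hx
    have hstep : ∀ i : Fin m,
        f i (z i) + (‖x‖ / su u) * (f i (z i - su u • (H i).mulVec w) - f i (z i))
          ≤ f i (z i - ‖x‖ • (H i).mulVec w) := by
      intro i
      have he : z i - su u • (H i).mulVec w =
          (1 - su u / ‖x‖) • (z i) + (su u / ‖x‖) • (z i - ‖x‖ • (H i).mulVec w) := by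
        rw [smul_sub, smul_smul, div_mul_cancel₀ _ ht.ne', sub_smul, one_smul]
        abel
      have hcv := (hconv i).2 (Set.mem_univ (z i))
        (Set.mem_univ (z i - ‖x‖ • (H i).mulVec w))
        (show (0:ℝ) ≤ 1 - su u / ‖x‖ by
          rw [sub_nonneg]; exact (div_le_one ht).mpr hst.le)
        (show (0:ℝ) ≤ su u / ‖x‖ by positivity)
        (show 1 - su u / ‖x‖ + su u / ‖x‖ = 1 by ring)
      rw [← he] at hcv
      have h2 : f i (z i - su u • (H i).mulVec w) - f i (z i)
          ≤ (su u / ‖x‖) * (f i (z i - ‖x‖ • (H i).mulVec w) - f i (z i)) := by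
        simp only [smul_eq_mul] at hcv
        ring_nf at hcv ⊢
        linarith [hcv]
      have h3 := mul_le_mul_of_nonneg_left h2 (le_of_lt (div_pos ht hspos))
      have h4 : (‖x‖ / su u) * ((su u / ‖x‖) *
          (f i (z i - ‖x‖ • (H i).mulVec w) - f i (z i)))
          = f i (z i - ‖x‖ • (H i).mulVec w) - f i (z i) := by
        field_simp
      rw [h4] at h3
      linarith
    have hsum : ∑ i ∈ Iᶜ, f i (z i) + (‖x‖ / su u) *
        ∑ i ∈ Iᶜ, (f i (z i - su u • (H i).mulVec w) - f i (z i))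
          ≤ ∑ i ∈ Iᶜ, f i (z i - ‖x‖ • (H i).mulVec w) := by
      rw [Finset.mul_sum, ← Finset.sum_add_distrib]
      exact Finset.sum_le_sum fun i _ => hstep i
    have hD : ∑ i ∈ Iᶜ, (f i (z i - su u • (H i).mulVec w) - f i (z i)) / su u
        = (∑ i ∈ Iᶜ, (f i (z i - su u • (H i).mulVec w) - f i (z i))) / su u :=
      (Finset.sum_div _ _ _).symm
    have hmul : ‖x‖ * ∑ i ∈ I, C i w < (‖x‖ / su u) *
        ∑ i ∈ Iᶜ, (f i (z i - su u • (H i).mulVec w) - f i (z i)) := by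
      have h5 := (mul_lt_mul_iff_right₀ ht).mpr hwU
      rw [hD] at h5
      have h6 : ‖x‖ * ((∑ i ∈ Iᶜ, (f i (z i - su u • (H i).mulVec w) - f i (z i))) / su u)
          = (‖x‖ / su u) * ∑ i ∈ Iᶜ, (f i (z i - su u • (H i).mulVec w) - f i (z i)) := by
        ring
      rwa [h6] at h5
    have hCx : ∑ i ∈ I, C i x = ‖x‖ * ∑ i ∈ I, C i w := by
      rw [Finset.mul_sum]
      refine Finset.sum_congr rfl fun i _ => ?_
      conv_lhs => rw [hxw]
      exact hChom i ‖x‖ ht w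
    have hHx : ∀ i : Fin m, (H i).mulVec x = ‖x‖ • (H i).mulVec w := by
      intro i
      conv_lhs => rw [hxw]
      exact mulVec_smul_euc (H i) ‖x‖ w
    calc ∑ i ∈ Iᶜ, f i (z i) + ∑ i ∈ I, C i x
        = ∑ i ∈ Iᶜ, f i (z i) + ‖x‖ * ∑ i ∈ I, C i w := by rw [hCx]
      _ < ∑ i ∈ Iᶜ, f i (z i) + (‖x‖ / su u) *
            ∑ i ∈ Iᶜ, (f i (z i - su u • (H i).mulVec w) - f i (z i)) := by linarith
      _ ≤ ∑ i ∈ Iᶜ, f i (z i - ‖x‖ • (H i).mulVec w) := hsum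
      _ = ∑ i ∈ Iᶜ, f i (z i - (H i).mulVec x) :=
          Finset.sum_congr rfl fun i _ => by rw [hHx i]
  -- assemble
  have key' : ∀ I : Finset (Fin m), ∃ μI : ℝ, 0 ≤ μI ∧ (I.card = p →
      ∀ x : EuclideanSpace ℝ (Fin n), μI < ‖x‖ →
        ∑ i ∈ Iᶜ, f i (z i) + ∑ i ∈ I, C i x < ∑ i ∈ Iᶜ, f i (z i - (H i).mulVec x)) := by
    intro I
    by_cases hI : I.card = p
    · obtain ⟨μI, h0, h⟩ := key I hI
      exact ⟨μI, h0, fun _ => h⟩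
    · exact ⟨0, le_refl 0, fun h => absurd h hI⟩
  choose μI hμI0 hμI using key'
  refine ⟨∑ I : Finset (Fin m), μI I, Finset.sum_nonneg fun I _ => hμI0 I, ?_⟩
  rintro a ⟨I₀, hI₀card, ha0⟩ xhat hmin
  have hpcard : p ≤ Fintype.card (Fin m) := by rw [Fintype.card_fin]; exact hpm.le
  obtain ⟨I, hI₀I, hIcard⟩ := Finset.exists_superset_card_eq hI₀card hpcard
  by_contra hgt
  push_neg at hgt
  have hxI : μI I < ‖xhat‖ :=
    lt_of_le_of_lt (Finset.single_le_sum (fun J _ => hμI0 J) (Finset.mem_univ I)) hgt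
  have hklt := hμI I hIcard xhat hxI
  have h0' : ∑ i, f i (z i + a i - (H i).mulVec xhat) ≤ ∑ i, f i (z i + a i) := by
    refine le_trans (hmin 0) (le_of_eq ?_)
    refine Finset.sum_congr rfl fun i _ => ?_
    rw [mulVec_zero_euc, sub_zero]
  have hsplit1 : ∑ i, f i (z i + a i - (H i).mulVec xhat)
      = ∑ i ∈ I, f i (z i + a i - (H i).mulVec xhat)
        + ∑ i ∈ Iᶜ, f i (z i - (H i).mulVec xhat) := by
    rw [← Finset.sum_add_sum_compl I]
    congr 1
    refine Finset.sum_congr rfl fun i hi => ?_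
    rw [ha0 i (fun hmem => (Finset.mem_compl.mp hi) (hI₀I hmem)), add_zero]
  have hsplit2 : ∑ i, f i (z i + a i)
      = ∑ i ∈ I, f i (z i + a i) + ∑ i ∈ Iᶜ, f i (z i) := by
    rw [← Finset.sum_add_sum_compl I]
    congr 1
    refine Finset.sum_congr rfl fun i hi => ?_
    rw [ha0 i (fun hmem => (Finset.mem_compl.mp hi) (hI₀I hmem)), add_zero]
  have hIbd : ∑ i ∈ I, f i (z i + a i)
      ≤ ∑ i ∈ I, f i (z i + a i - (H i).mulVec xhat) + ∑ i ∈ I, C i xhat := by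
    rw [← Finset.sum_add_distrib]
    refine Finset.sum_le_sum fun i _ => ?_
    have h := hL1 i (z i + a i - (H i).mulVec xhat) xhat
    have he : z i + a i - (H i).mulVec xhat + (H i).mulVec xhat = z i + a i := by abel
    rwa [he] at h
  rw [hsplit1, hsplit2] at h0'
  linarith
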